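/- Let p(t) = ξ t³ + (η+3ζ²)t² + ξ t + η − ζ² with ξ > 0, √3ξ + η + 3ζ² > 0, and ξ + √3 η > 0. Then all coefficients of p(t + 1/√3) are positive, hence p has no real root greater than 1/√3. -/
import Mathlib


open Real

theorem stmt_11 (ξ η ζ : ℝ) (p : ℝ → ℝ)
    (hp : ∀ t, p t = ξ * t^3 + (η + 3*ζ^2) * t^2 + ξ * t + η - ζ^2)
    (hξ : 0 < ξ) (hc1 : 0 < Real.sqrt 3 * ξ + η + 3*ζ^2)
    (hc : 0 < ξ + Real.sqrt 3 * η) :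
    (0 < 9*ξ ∧ 0 < 9*(Real.sqrt 3 * ξ + η + 3*ζ^2) ∧
     0 < 6*Real.sqrt 3 * (Real.sqrt 3 * ξ + η + 3*ζ^2) ∧
     0 < 4*Real.sqrt 3 * (ξ + Real.sqrt 3 * η)) ∧
    ∀ t : ℝ, 1 / Real.sqrt 3 < t → p t ≠ 0 := by
  have h3 : (0:ℝ) < Real.sqrt 3 := Real.sqrt_pos.mpr (by norm_num)
  have hsq : Real.sqrt 3 ^ 2 = 3 := Real.sq_sqrt (by norm_num)
  refine ⟨⟨by linarith, by linarith, by positivity, by positivity⟩, ?_⟩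
  intro t ht
  have hs : 0 < t - 1 / Real.sqrt 3 := by linarith
  have ht3 : 0 < Real.sqrt 3 * t - 1 := by
    have := (div_lt_iff₀ h3).mp ht
    linarith
  have hpos : 0 < p t := by
    rw [hp t]
    have key : ξ * t^3 + (η + 3*ζ^2) * t^2 + ξ * t + η - ζ^2 =
        (ξ * (Real.sqrt 3 * t - 1)^3 * Real.sqrt 3
        + 3 * (Real.sqrt 3 * ξ + η + 3*ζ^2) * (Real.sqrt 3 * t - 1)^2
        + 6 * (Real.sqrt 3 * ξ + η + 3*ζ^2) * (Real.sqrt 3 * t - 1)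
        + 4 * Real.sqrt 3 * (ξ + Real.sqrt 3 * η)) / 9 := by
      linear_combination (-(ξ*t^3*(Real.sqrt 3^2+3) - 3*ξ*t^2*Real.sqrt 3 + 3*ξ*t
        + 3*(Real.sqrt 3*ξ+η+3*ζ^2)*t^2 + 4*η)/9) * hsq
    rw [key]
    positivity
  intro h
  rw [h] at hpos
  exact lt_irrefl 0 hpos
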